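/- arXiv:2007.06538 — 3 statements merged into one kernel-verified Lean document; each statement's English description precedes it below -/
import Mathlib

section
/- Let n, m ≥ 1, aπ ∈ W_n and bτ ∈ W_m with aπ ⊥ bτ. Then the centralizer of aπ # bτ in W_{n+m} equals { uσ # vη : uσ lies in the centralizer of aπ in W_n and vη lies in the centralizer of bτ in W_m }. -/
/-- The action of a permutation `σ ∈ S_n` on a vector `a ∈ (ℤ/2)^n`:
`(σ · a)_i = a_{σ⁻¹ i}`. -/
def permAct {n : ℕ} (σ : Equiv.Perm (Fin n)) (a : Fin n → ZMod 2) : Fin n → ZMod 2 :=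
  fun i => a (σ⁻¹ i)

/-- The underlying set of the hyperoctahedral group `W n = (ℤ/2)^n ⋊ S_n`. -/
@[ext]
structure W (n : ℕ) where
  vec : Fin n → ZMod 2
  perm : Equiv.Perm (Fin n)

/-- Group structure of `W n`: `(a,σ)(b,μ) = (a + σ·b, σμ)`. -/
instance (n : ℕ) : Group (W n) where
  mul x y := ⟨x.vec + permAct x.perm y.vec, x.perm * y.perm⟩
  one := ⟨0, 1⟩
  inv x := ⟨permAct x.perm⁻¹ (-x.vec), x.perm⁻¹⟩
  mul_assoc x y z := by
    refine W.ext ?_ ?_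
    · show (x.vec + permAct x.perm y.vec) + permAct (x.perm * y.perm) z.vec
        = x.vec + permAct x.perm (y.vec + permAct y.perm z.vec)
      funext i
      simp [permAct, mul_inv_rev, Equiv.Perm.mul_apply, add_assoc]
    · exact mul_assoc _ _ _
  one_mul x := by
    refine W.ext ?_ ?_
    · show (0 : Fin n → ZMod 2) + permAct 1 x.vec = x.vec
      funext i; simp [permAct]
    · exact one_mul _
  mul_one x := by
    refine W.ext ?_ ?_
    · show x.vec + permAct x.perm 0 = x.vec
      funext i; simp [permAct]
    · exact mul_one _
  inv_mul_cancel x := by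
    refine W.ext ?_ ?_
    · show permAct x.perm⁻¹ (-x.vec) + permAct x.perm⁻¹ x.vec = 0
      funext i; simp [permAct, CharTwo.add_self_eq_zero]
    · exact inv_mul_cancel _

@[simp] theorem W.mul_vec {n : ℕ} (x y : W n) :
    (x * y).vec = x.vec + permAct x.perm y.vec := rfl
@[simp] theorem W.mul_perm {n : ℕ} (x y : W n) :
    (x * y).perm = x.perm * y.perm := rfl
@[simp] theorem W.one_vec {n : ℕ} : (1 : W n).vec = 0 := rfl
@[simp] theorem W.one_perm {n : ℕ} : (1 : W n).perm = 1 := rfl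
@[simp] theorem W.inv_vec {n : ℕ} (x : W n) :
    (x⁻¹).vec = permAct x.perm⁻¹ (-x.vec) := rfl
@[simp] theorem W.inv_perm {n : ℕ} (x : W n) : (x⁻¹).perm = x.perm⁻¹ := rfl

/-- Conjugation `x ▷ y = x y x⁻¹` in a group. -/
def conjAct' {G : Type*} [Group G] (x y : G) : G := x * y * x⁻¹

/-- `sq(x,y) = x ▷ (y ▷ (x ▷ y))`. -/
def sqD {G : Type*} [Group G] (x y : G) : G := conjAct' x (conjAct' y (conjAct' x y))

/-- Conjugacy class of `x` in the group `G`. -/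
def conjClass {G : Type*} [Group G] (x : G) : Set G := {y | ∃ t : G, y = t * x * t⁻¹}

/-- A subset `O` of a group is of type D. -/
def IsTypeD {G : Type*} [Group G] (O : Set G) : Prop :=
  ∃ R S : Set G, R ⊆ O ∧ S ⊆ O ∧ R.Nonempty ∧ S.Nonempty ∧ Disjoint R S ∧
    (∀ r ∈ R, ∀ r' ∈ R, conjAct' r r' ∈ R) ∧
    (∀ s ∈ S, ∀ s' ∈ S, conjAct' s s' ∈ S) ∧
    (∀ r ∈ R, ∀ s ∈ S, conjAct' r s ∈ S ∧ conjAct' s r ∈ R) ∧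
    (∃ a ∈ R, ∃ b ∈ S, sqD a b ≠ b)

/-- The subgroup `K_n ⋊ S_n` of `W n`, where `K_n = {a : a_1 + ⋯ + a_n = 0}`. -/
def Ksub (n : ℕ) : Subgroup (W n) where
  carrier := {x | ∑ i, x.vec i = 0}
  one_mem' := by simp
  mul_mem' := by
    intro x y hx hy
    simp only [Set.mem_setOf_eq] at *
    rw [W.mul_vec]
    simp only [Pi.add_apply, Finset.sum_add_distrib, hx, zero_add, permAct]
    rw [Equiv.sum_comp x.perm⁻¹ y.vec]
    exact hy
  inv_mem' := by
    intro x hx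
    simp only [Set.mem_setOf_eq] at *
    rw [W.inv_vec]
    simp only [permAct, inv_inv, Pi.neg_apply]
    rw [Finset.sum_neg_distrib, Equiv.sum_comp x.perm x.vec, hx, neg_zero]
/-- Juxtaposition of permutations: `(π#τ)(i) = π(i)` for `i < n`, `(π#τ)(n+j) = n + τ(j)`. -/
def pjux {n m : ℕ} (π : Equiv.Perm (Fin n)) (τ : Equiv.Perm (Fin m)) :
    Equiv.Perm (Fin (n + m)) :=
  finSumFinEquiv.permCongr (Equiv.sumCongr π τ)

/-- Juxtaposition `aπ # bτ = (a#b, π#τ) ∈ W (n+m)`. -/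
def wjux {n m : ℕ} (x : W n) (y : W m) : W (n + m) :=
  ⟨Fin.append x.vec y.vec, pjux x.perm y.perm⟩

/-- `aπ ⊥ bτ`: every cycle length (orbit size) of `π` differs from every cycle
length of `τ`. -/
def orthogonal {n m : ℕ} (π : Equiv.Perm (Fin n)) (τ : Equiv.Perm (Fin m)) : Prop :=
  ∀ (i : Fin n) (j : Fin m),
    Function.minimalPeriod (⇑π) i ≠ Function.minimalPeriod (⇑τ) j

private lemma minper_congr {α β : Type*} (f : α → α) (g : β → β) (e : α → β) (x : α)
    (hinj : Function.Injective e) (hsemi : ∀ a, e (f a) = g (e a)) :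
    Function.minimalPeriod g (e x) = Function.minimalPeriod f x := by
  have hiter : ∀ (k : ℕ) (a : α), g^[k] (e a) = e (f^[k] a) := by
    intro k
    induction k with
    | zero => intro a; simp
    | succ k ih =>
      intro a
      rw [Function.iterate_succ_apply, Function.iterate_succ_apply, ← hsemi, ih]
  have hper : ∀ k, Function.IsPeriodicPt g k (e x) ↔ Function.IsPeriodicPt f k x := by
    intro k
    unfold Function.IsPeriodicPt Function.IsFixedPt
    rw [hiter]
    exact ⟨fun h => hinj h, fun h => by rw [h]⟩
  by_cases hx : x ∈ Function.periodicPts f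
  · have h1 : e x ∈ Function.periodicPts g := by
      obtain ⟨k, hk, hkp⟩ := hx
      exact ⟨k, hk, (hper k).mpr hkp⟩
    apply le_antisymm
    · exact Function.IsPeriodicPt.minimalPeriod_le
        (Function.minimalPeriod_pos_of_mem_periodicPts hx)
        ((hper _).mpr (Function.isPeriodicPt_minimalPeriod f x))
    · exact Function.IsPeriodicPt.minimalPeriod_le
        (Function.minimalPeriod_pos_of_mem_periodicPts h1)
        ((hper _).mp (Function.isPeriodicPt_minimalPeriod g (e x)))
  · have h1 : e x ∉ Function.periodicPts g := by
      rintro ⟨k, hk, hkp⟩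
      exact hx ⟨k, hk, (hper k).mp hkp⟩
    rw [Function.minimalPeriod_eq_zero_of_notMem_periodicPts hx,
        Function.minimalPeriod_eq_zero_of_notMem_periodicPts h1]

private lemma pjux_apply {n m : ℕ} (π : Equiv.Perm (Fin n)) (τ : Equiv.Perm (Fin m))
    (s : Fin n ⊕ Fin m) :
    pjux π τ (finSumFinEquiv s) = finSumFinEquiv (Equiv.sumCongr π τ s) := by
  simp [pjux]

private lemma pjux_mul {n m : ℕ} (π σ : Equiv.Perm (Fin n)) (τ η : Equiv.Perm (Fin m)) :
    pjux π τ * pjux σ η = pjux (π * σ) (τ * η) := by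
  apply Equiv.ext
  intro k
  obtain ⟨s, rfl⟩ := finSumFinEquiv.surjective k
  rw [Equiv.Perm.mul_apply, pjux_apply, pjux_apply, pjux_apply]
  cases s <;> simp

private lemma pjux_inv {n m : ℕ} (π : Equiv.Perm (Fin n)) (τ : Equiv.Perm (Fin m)) :
    (pjux π τ)⁻¹ = pjux π⁻¹ τ⁻¹ := by
  rw [eq_comm, eq_inv_iff_mul_eq_one, pjux_mul]
  simp only [inv_mul_cancel]
  apply Equiv.ext
  intro k
  obtain ⟨s, rfl⟩ := finSumFinEquiv.surjective k
  rw [pjux_apply]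
  cases s <;> simp

private lemma permAct_append {n m : ℕ} (σ : Equiv.Perm (Fin n)) (η : Equiv.Perm (Fin m))
    (a : Fin n → ZMod 2) (b : Fin m → ZMod 2) :
    permAct (pjux σ η) (Fin.append a b) = Fin.append (permAct σ a) (permAct η b) := by
  funext k
  obtain ⟨s, rfl⟩ := finSumFinEquiv.surjective k
  unfold permAct
  rw [pjux_inv]
  cases s with
  | inl i =>
    have h1 : (pjux σ⁻¹ η⁻¹) (Fin.castAdd m i) = Fin.castAdd m (σ⁻¹ i) :=
      pjux_apply σ⁻¹ η⁻¹ (Sum.inl i)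
    show Fin.append a b ((pjux σ⁻¹ η⁻¹) (Fin.castAdd m i)) = _
    rw [h1, Fin.append_left]
    show _ = Fin.append (permAct σ a) (permAct η b) (Fin.castAdd m i)
    rw [Fin.append_left]
    rfl
  | inr j =>
    have h1 : (pjux σ⁻¹ η⁻¹) (Fin.natAdd n j) = Fin.natAdd n (η⁻¹ j) :=
      pjux_apply σ⁻¹ η⁻¹ (Sum.inr j)
    show Fin.append a b ((pjux σ⁻¹ η⁻¹) (Fin.natAdd n j)) = _
    rw [h1, Fin.append_right]
    show _ = Fin.append (permAct σ a) (permAct η b) (Fin.natAdd n j)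
    rw [Fin.append_right]
    rfl

private lemma wjux_mul {n m : ℕ} (u x : W n) (v y : W m) :
    wjux u v * wjux x y = wjux (u * x) (v * y) := by
  refine W.ext ?_ ?_
  · show (wjux u v).vec + permAct (wjux u v).perm (wjux x y).vec = _
    show Fin.append u.vec v.vec + permAct (pjux u.perm v.perm) (Fin.append x.vec y.vec)
      = Fin.append (u * x).vec (v * y).vec
    rw [permAct_append]
    funext k
    obtain ⟨s, rfl⟩ := finSumFinEquiv.surjective k
    cases s with
    | inl i =>
      have : finSumFinEquiv (Sum.inl i) = Fin.castAdd m i := rfl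
      simp [this, Fin.append_left]
    | inr j =>
      have : finSumFinEquiv (Sum.inr j) = Fin.natAdd n j := rfl
      simp [this, Fin.append_right]
  · exact pjux_mul u.perm x.perm v.perm y.perm

private lemma wjux_inj {n m : ℕ} {u x : W n} {v y : W m} (h : wjux u v = wjux x y) :
    u = x ∧ v = y := by
  have hv : Fin.append u.vec v.vec = Fin.append x.vec y.vec := congrArg W.vec h
  have hp : pjux u.perm v.perm = pjux x.perm y.perm := congrArg W.perm h
  constructor
  · refine W.ext ?_ ?_
    · funext i
      have := congrFun hv (Fin.castAdd m i)
      simpa [Fin.append_left] using this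
    · apply Equiv.ext
      intro i
      have := congrArg (fun p => p (finSumFinEquiv (Sum.inl i))) hp
      simp only [pjux_apply] at this
      have := finSumFinEquiv.injective this
      simpa using this
  · refine W.ext ?_ ?_
    · funext j
      have := congrFun hv (Fin.natAdd n j)
      simpa [Fin.append_right] using this
    · apply Equiv.ext
      intro j
      have := congrArg (fun p => p (finSumFinEquiv (Sum.inr j))) hp
      simp only [pjux_apply] at this
      have := finSumFinEquiv.injective this
      simpa using this

/-- for orthogonal `aπ, bτ`, the centralizer of `aπ # bτ` in
`W (n+m)` is the juxtaposition of the two centralizers. -/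
theorem centralizer_wjux (n m : ℕ) (hn : 1 ≤ n) (hm : 1 ≤ m) (x : W n) (y : W m)
    (horth : orthogonal x.perm y.perm) :
    {z : W (n + m) | z * wjux x y = wjux x y * z} =
      {z : W (n + m) | ∃ (u : W n) (v : W m),
        u * x = x * u ∧ v * y = y * v ∧ z = wjux u v} := by
  ext z
  simp only [Set.mem_setOf_eq]
  constructor
  · intro hz
    -- perm commutation
    have hpc : z.perm * pjux x.perm y.perm = pjux x.perm y.perm * z.perm := by
      have := congrArg W.perm hz
      simpa [wjux] using this
    set P : Equiv.Perm (Fin n ⊕ Fin m) := Equiv.sumCongr x.perm y.perm with hP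
    -- q on the sum type
    set q : Fin n ⊕ Fin m → Fin n ⊕ Fin m :=
      fun s => finSumFinEquiv.symm (z.perm (finSumFinEquiv s)) with hq
    have hqP : ∀ s, q (P s) = P (q s) := by
      intro s
      have h1 : z.perm (pjux x.perm y.perm (finSumFinEquiv s))
          = pjux x.perm y.perm (z.perm (finSumFinEquiv s)) := by
        have := congrArg (fun p => p (finSumFinEquiv s)) hpc
        simpa using this
      have h2 : pjux x.perm y.perm (z.perm (finSumFinEquiv s))
          = finSumFinEquiv (P (q s)) := by
        rw [hq]
        conv_lhs => rw [← Equiv.apply_symm_apply finSumFinEquiv (z.perm (finSumFinEquiv s))]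
        rw [pjux_apply]
      rw [hq]
      simp only
      rw [pjux_apply] at h1
      rw [h1, h2]
      simp [hq]
    -- minimal periods
    have hminl : ∀ i : Fin n, Function.minimalPeriod (⇑P) (Sum.inl i)
        = Function.minimalPeriod (⇑x.perm) i := by
      intro i
      exact minper_congr _ _ Sum.inl i Sum.inl_injective (fun a => by simp [hP])
    have hminr : ∀ j : Fin m, Function.minimalPeriod (⇑P) (Sum.inr j)
        = Function.minimalPeriod (⇑y.perm) j := by
      intro j
      exact minper_congr _ _ Sum.inr j Sum.inr_injective (fun a => by simp [hP])
    have hqmin : ∀ s, Function.minimalPeriod (⇑P) (q s) = Function.minimalPeriod (⇑P) s := by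
      intro s
      have hqinj : Function.Injective q := by
        intro a b hab
        rw [hq] at hab
        simp only at hab
        exact finSumFinEquiv.injective (z.perm.injective (finSumFinEquiv.symm.injective hab))
      exact minper_congr (⇑P) (⇑P) q s hqinj hqP
    -- q preserves blocks
    have hql : ∀ i : Fin n, ∃ i' : Fin n, q (Sum.inl i) = Sum.inl i' := by
      intro i
      rcases hs : q (Sum.inl i) with i' | j'
      · exact ⟨i', rfl⟩
      · exfalso
        have := hqmin (Sum.inl i)
        rw [hs, hminr, hminl] at this
        exact horth i j' this.symm
    have hqr : ∀ j : Fin m, ∃ j' : Fin m, q (Sum.inr j) = Sum.inr j' := by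
      intro j
      rcases hs : q (Sum.inr j) with i' | j'
      · exfalso
        have := hqmin (Sum.inr j)
        rw [hs, hminl, hminr] at this
        exact horth i' j this
      · exact ⟨j', rfl⟩
    -- build σ and η
    set f : Fin n → Fin n := fun i => (hql i).choose with hf
    have hfspec : ∀ i, q (Sum.inl i) = Sum.inl (f i) := fun i => (hql i).choose_spec
    set g : Fin m → Fin m := fun j => (hqr j).choose with hg
    have hgspec : ∀ j, q (Sum.inr j) = Sum.inr (g j) := fun j => (hqr j).choose_spec
    -- inverse function
    set q' : Fin n ⊕ Fin m → Fin n ⊕ Fin m :=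
      fun s => finSumFinEquiv.symm (z.perm⁻¹ (finSumFinEquiv s)) with hq'
    have hqq' : ∀ s, q' (q s) = s := by
      intro s; rw [hq, hq']; simp
    have hq'q : ∀ s, q (q' s) = s := by
      intro s; rw [hq, hq']; simp
    have hq'l : ∀ i : Fin n, ∃ i' : Fin n, q' (Sum.inl i) = Sum.inl i' := by
      intro i
      rcases hs : q' (Sum.inl i) with i' | j'
      · exact ⟨i', rfl⟩
      · exfalso
        have h1 : q (Sum.inr j') = Sum.inl i := by rw [← hs, hq'q]
        obtain ⟨j'', hj''⟩ := hqr j'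
        rw [h1] at hj''
        exact Sum.inl_ne_inr hj''
    have hq'r : ∀ j : Fin m, ∃ j' : Fin m, q' (Sum.inr j) = Sum.inr j' := by
      intro j
      rcases hs : q' (Sum.inr j) with i' | j'
      · exfalso
        have h1 : q (Sum.inl i') = Sum.inr j := by rw [← hs, hq'q]
        obtain ⟨i'', hi''⟩ := hql i'
        rw [h1] at hi''
        exact Sum.inr_ne_inl hi''
      · exact ⟨j', rfl⟩
    set f' : Fin n → Fin n := fun i => (hq'l i).choose with hf'
    have hf'spec : ∀ i, q' (Sum.inl i) = Sum.inl (f' i) := fun i => (hq'l i).choose_spec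
    set g' : Fin m → Fin m := fun j => (hq'r j).choose with hg'
    have hg'spec : ∀ j, q' (Sum.inr j) = Sum.inr (g' j) := fun j => (hq'r j).choose_spec
    set σ : Equiv.Perm (Fin n) := ⟨f, f', by
        intro i
        apply Sum.inl_injective
        rw [← hf'spec, ← hfspec, hqq'], by
        intro i
        apply Sum.inl_injective
        rw [← hfspec, ← hf'spec, hq'q]⟩ with hσ
    set η : Equiv.Perm (Fin m) := ⟨g, g', by
        intro j
        apply Sum.inr_injective
        rw [← hg'spec, ← hgspec, hqq'], by
        intro j
        apply Sum.inr_injective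
        rw [← hgspec, ← hg'spec, hq'q]⟩ with hη
    set u : W n := ⟨fun i => z.vec (Fin.castAdd m i), σ⟩ with hu
    set v : W m := ⟨fun j => z.vec (Fin.natAdd n j), η⟩ with hv
    have hzuv : z = wjux u v := by
      refine W.ext ?_ ?_
      · funext k
        obtain ⟨s, rfl⟩ := finSumFinEquiv.surjective k
        cases s with
        | inl i =>
          have h1 : finSumFinEquiv (Sum.inl i) = Fin.castAdd m i := rfl
          show z.vec _ = Fin.append u.vec v.vec _
          rw [h1, Fin.append_left]
        | inr j =>
          have h1 : finSumFinEquiv (Sum.inr j) = Fin.natAdd n j := rfl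
          show z.vec _ = Fin.append u.vec v.vec _
          rw [h1, Fin.append_right]
      · show z.perm = pjux σ η
        apply Equiv.ext
        intro k
        obtain ⟨s, rfl⟩ := finSumFinEquiv.surjective k
        rw [pjux_apply]
        have hz : z.perm (finSumFinEquiv s) = finSumFinEquiv (q s) := by
          rw [hq]; simp
        rw [hz]
        congr 1
        cases s with
        | inl i => rw [hfspec]; rfl
        | inr j => rw [hgspec]; rfl
    rw [hzuv, wjux_mul, wjux_mul] at hz
    obtain ⟨h1, h2⟩ := wjux_inj hz
    exact ⟨u, v, h1, h2, hzuv⟩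
  · rintro ⟨u, v, hu, hv, rfl⟩
    rw [wjux_mul, wjux_mul, hu, hv]
end

section
/- Let p be odd with p ≥ 5, let n ≥ p, let τ ∈ S_n be the p-cycle (1 2 ⋯ p), and let a ∈ (ℤ/2)^n. Let H be either W_n or the subgroup K_n ⋊ S_n, and suppose (a,τ) ∈ H. Then the conjugacy class of (a,τ) in H is of type D. -/
/-! ### Auxiliary material for `typeD_pcycle` -/

section TypeDAux

variable {p n : ℕ}

/-- `σ` shifts the block `{0,…,p-1}` by `k` (mod `p`). -/
def Shift (p : ℕ) {n : ℕ} (k : ℕ) (σ : Equiv.Perm (Fin n)) : Prop :=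
  ∀ i : Fin n, (i : ℕ) < p → ((σ i : ℕ) = ((i : ℕ) + k) % p)

lemma Shift.one (hp0 : 0 < p) : Shift p 0 (1 : Equiv.Perm (Fin n)) := by
  intro i hi
  simp [Nat.mod_eq_of_lt hi]

lemma Shift.mul (hp0 : 0 < p) {σ μ : Equiv.Perm (Fin n)} {k m : ℕ}
    (hσ : Shift p k σ) (hμ : Shift p m μ) : Shift p (m + k) (σ * μ) := by
  intro i hi
  have h1 := hμ i hi
  have hlt : ((μ i : ℕ)) < p := by rw [h1]; exact Nat.mod_lt _ hp0
  rw [Equiv.Perm.mul_apply, hσ (μ i) hlt, h1, Nat.mod_add_mod, add_assoc]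

lemma Shift.inv (hp0 : 0 < p) (hpn : p ≤ n) {σ : Equiv.Perm (Fin n)} {k : ℕ}
    (hσ : Shift p k σ) : Shift p (p - k % p) σ⁻¹ := by
  intro j hj
  have hm : (((j : ℕ) + (p - k % p)) % p) < p := Nat.mod_lt _ hp0
  have happ : σ ⟨((j : ℕ) + (p - k % p)) % p, hm.trans_le hpn⟩ = j := by
    apply Fin.ext
    rw [hσ _ hm]
    have h4 := Nat.mod_add_div k p
    have h5 : k % p < p := Nat.mod_lt _ hp0
    rw [Nat.mod_add_mod]
    have h6 : k % p ≤ k := Nat.mod_le k p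
    have hq : k - k % p = p * (k / p) := by omega
    have h8 : (j : ℕ) + (p - k % p) + k = (j : ℕ) + (k - k % p) + p := by omega
    rw [h8, hq, Nat.add_mod_right, Nat.add_mul_mod_self_left, Nat.mod_eq_of_lt hj]
  have h9 : σ⁻¹ j = ⟨((j : ℕ) + (p - k % p)) % p, hm.trans_le hpn⟩ :=
    Equiv.Perm.inv_eq_iff_eq.mpr happ.symm
  rw [h9]

lemma Shift.inv_apply (hp0 : 0 < p) (hpn : p ≤ n) {σ : Equiv.Perm (Fin n)} {k : ℕ}
    (hσ : Shift p k σ) (j : Fin n) (hj : (j : ℕ) < p) {m : ℕ}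
    (hm : ((j : ℕ) + (p - k % p)) % p = m) (hmn : m < n) :
    σ⁻¹ j = ⟨m, hmn⟩ := by
  apply Fin.ext
  rw [hσ.inv hp0 hpn j hj, hm]

lemma modinv_helper (hp0 : 0 < p) {j k m : ℕ} (hk : k < p) (hm : m < p)
    (h : j + (p - k) = m ∨ j + (p - k) = m + p) :
    (j + (p - k % p)) % p = m := by
  rw [Nat.mod_eq_of_lt hk]
  rcases h with h | h
  · rw [h, Nat.mod_eq_of_lt hm]
  · rw [h, Nat.add_mod_right, Nat.mod_eq_of_lt hm]

lemma natmod_eq (hp0 : 0 < p) {A B : ℕ} (hB : B < p)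
    (h : (A : ZMod p) = (B : ZMod p)) : A % p = B := by
  haveI : NeZero p := ⟨hp0.ne'⟩
  have h2 := congrArg ZMod.val h
  rwa [ZMod.val_natCast, ZMod.val_natCast, Nat.mod_eq_of_lt hB] at h2

lemma halfkey (h2 : 2 * ((p + 1) / 2) = p + 1) :
    (((p + 1) / 2 : ℕ) : ZMod p) * 2 = 1 := by
  have h3 : ((2 * ((p + 1) / 2) : ℕ) : ZMod p) = ((p + 1 : ℕ) : ZMod p) := by
    rw [h2]
  push_cast at h3
  rw [ZMod.natCast_self, zero_add] at h3
  rw [mul_comm] at h3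
  exact h3

/-- The "doubling" permutation on the block `{0,…,p-1}`, identity elsewhere. -/
def dblPerm (p n : ℕ) (h2 : 2 * ((p + 1) / 2) = p + 1) (hp0 : 0 < p) (hpn : p ≤ n) :
    Equiv.Perm (Fin n) where
  toFun i := if _ : (i : ℕ) < p then ⟨2 * (i : ℕ) % p, (Nat.mod_lt _ hp0).trans_le hpn⟩ else i
  invFun i := if _ : (i : ℕ) < p then
      ⟨(p + 1) / 2 * (i : ℕ) % p, (Nat.mod_lt _ hp0).trans_le hpn⟩ else i
  left_inv := by
    intro i
    by_cases h : (i : ℕ) < p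
    · have hlt : 2 * (i : ℕ) % p < p := Nat.mod_lt _ hp0
      simp only [dif_pos h, dif_pos hlt]
      apply Fin.ext
      apply natmod_eq hp0 h
      push_cast [ZMod.natCast_mod]
      linear_combination (((i : ℕ) : ZMod p)) * halfkey h2
    · simp only [dif_neg h]
  right_inv := by
    intro i
    by_cases h : (i : ℕ) < p
    · have hlt : (p + 1) / 2 * (i : ℕ) % p < p := Nat.mod_lt _ hp0
      simp only [dif_pos h, dif_pos hlt]
      apply Fin.ext
      apply natmod_eq hp0 h
      push_cast [ZMod.natCast_mod]
      linear_combination (((i : ℕ) : ZMod p)) * halfkey h2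
    · simp only [dif_neg h]

lemma dblPerm_apply_lt (h2 : 2 * ((p + 1) / 2) = p + 1) (hp0 : 0 < p) (hpn : p ≤ n)
    {i : Fin n} (hi : (i : ℕ) < p) :
    dblPerm p n h2 hp0 hpn i = ⟨2 * (i : ℕ) % p, (Nat.mod_lt _ hp0).trans_le hpn⟩ := by
  simp only [dblPerm, Equiv.coe_fn_mk, dif_pos hi]

lemma dblPerm_apply_ge (h2 : 2 * ((p + 1) / 2) = p + 1) (hp0 : 0 < p) (hpn : p ≤ n)
    {i : Fin n} (hi : ¬ (i : ℕ) < p) :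
    dblPerm p n h2 hp0 hpn i = i := by
  simp only [dblPerm, Equiv.coe_fn_mk, dif_neg hi]

lemma dblPerm_inv_apply_lt (h2 : 2 * ((p + 1) / 2) = p + 1) (hp0 : 0 < p) (hpn : p ≤ n)
    {i : Fin n} (hi : (i : ℕ) < p) :
    (dblPerm p n h2 hp0 hpn)⁻¹ i
      = ⟨(p + 1) / 2 * (i : ℕ) % p, (Nat.mod_lt _ hp0).trans_le hpn⟩ := by
  show (dblPerm p n h2 hp0 hpn).symm i = _
  simp only [dblPerm, Equiv.coe_fn_symm_mk, dif_pos hi]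

lemma dblPerm_inv_apply_ge (h2 : 2 * ((p + 1) / 2) = p + 1) (hp0 : 0 < p) (hpn : p ≤ n)
    {i : Fin n} (hi : ¬ (i : ℕ) < p) :
    (dblPerm p n h2 hp0 hpn)⁻¹ i = i := by
  show (dblPerm p n h2 hp0 hpn).symm i = _
  simp only [dblPerm, Equiv.coe_fn_symm_mk, dif_neg hi]

/-- Vector part of `sq((b,τ'),(c,ρ'))` for commuting `τ'`, `ρ'`. -/
def vec3 {n : ℕ} (τ' ρ' : Equiv.Perm (Fin n)) (b c : Fin n → ZMod 2) : Fin n → ZMod 2 :=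
  b + permAct τ' (c + permAct ρ' (b + permAct τ' c + permAct ρ' b) + permAct ρ' c)
    + permAct ρ' b

lemma neg_zmod2_elt : ∀ z : ZMod 2, -z = z := by decide

lemma neg_zmod2 (v : Fin n → ZMod 2) : -v = v :=
  funext fun i => neg_zmod2_elt (v i)

lemma conj_mk (b c : Fin n → ZMod 2) (σ μ : Equiv.Perm (Fin n)) (h : σ * μ = μ * σ) :
    conjAct' (W.mk b σ) (W.mk c μ) = W.mk (b + permAct σ c + permAct μ b) μ := by
  have hperm : σ * μ * σ⁻¹ = μ := by rw [h, mul_inv_cancel_right]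
  have h3 : σ * μ⁻¹ * σ⁻¹ = μ⁻¹ := by
    have h5 := congrArg Inv.inv hperm
    rw [mul_inv_rev, mul_inv_rev, inv_inv, ← mul_assoc] at h5
    exact h5
  have h2 : ∀ i, σ (μ⁻¹ (σ⁻¹ i)) = μ⁻¹ i := by
    intro i
    have h4 := congrArg (fun π : Equiv.Perm (Fin n) => π i) h3
    simpa [Equiv.Perm.mul_apply] using h4
  unfold conjAct'
  refine W.ext ?_ ?_
  · funext i
    simp only [W.mul_vec, W.inv_vec, W.mul_perm, Pi.add_apply, permAct, mul_inv_rev,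
      inv_inv, Equiv.Perm.mul_apply, Pi.neg_apply]
    rw [h2, neg_zmod2_elt]
  · simpa using hperm

lemma sq_formula (τ' ρ' : Equiv.Perm (Fin n)) (h : τ' * ρ' = ρ' * τ')
    (b c : Fin n → ZMod 2) :
    sqD (W.mk b τ') (W.mk c ρ') = W.mk (vec3 τ' ρ' b c) ρ' := by
  unfold sqD vec3
  rw [conj_mk b c τ' ρ' h, conj_mk c _ ρ' ρ' rfl, conj_mk b _ τ' ρ' h]

lemma vec3_split (τ' ρ' : Equiv.Perm (Fin n)) (e a c : Fin n → ZMod 2) :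
    vec3 τ' ρ' (e + a + permAct τ' e) c
      = vec3 τ' ρ' a c +
        ((e + permAct τ' e)
          + permAct τ' (permAct ρ' ((e + permAct τ' e) + permAct ρ' (e + permAct τ' e)))
          + permAct ρ' (e + permAct τ' e)) := by
  funext i
  simp only [vec3, permAct, Pi.add_apply]
  abel

lemma modK' (hp0 : 0 < p) (k c j : ℕ) :
    (j + ((p - k % p) + (c + k))) % p = (j + c) % p := by
  have h4 := Nat.mod_add_div k p
  have h5 : k % p < p := Nat.mod_lt _ hp0
  have h6 : k % p ≤ k := Nat.mod_le k p
  have hq : k - k % p = p * (k / p) := by omega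
  have h8 : j + ((p - k % p) + (c + k)) = (j + c) + (k - k % p) + p := by omega
  rw [h8, hq, Nat.add_mod_right, Nat.add_mul_mod_self_left]

lemma zmod2_add_self (z : ZMod 2) : z + z = 0 := by revert z; decide

lemma zmod2_eq_of_add_eq_zero {x y : ZMod 2} (h : x + y = 0) : x = y := by
  revert h; revert x y; decide

lemma zmod2_add_one_ne (x : ZMod 2) : x + 1 ≠ x := by revert x; decide

lemma conj_conj {G : Type*} [Group G] (x z t u : G) :
    conjAct' (t * x * t⁻¹) (u * z * u⁻¹)
      = (t * x * t⁻¹ * u) * z * (t * x * t⁻¹ * u)⁻¹ := by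
  simp only [conjAct']
  group

end TypeDAux
/-- for odd `p ≥ 5` and `τ` the `p`-cycle `(1 2 ⋯ p)` in `S_n`
(`n ≥ p`), the conjugacy class of `(a,τ)` in `H` (where `H` is `W n` or
`K_n ⋊ S_n`) is of type D. -/
theorem typeD_pcycle (p n : ℕ) (hp : Odd p) (hp5 : 5 ≤ p) (hpn : p ≤ n)
    (τ : Equiv.Perm (Fin n))
    (hτ : ∀ i : Fin n,
      ((τ i : ℕ)) = if (i : ℕ) < p then ((i : ℕ) + 1) % p else (i : ℕ))
    (a : Fin n → ZMod 2)
    (H : Subgroup (W n)) (hH : H = ⊤ ∨ H = Ksub n)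
    (hw : W.mk a τ ∈ H) :
    IsTypeD (conjClass (⟨W.mk a τ, hw⟩ : H)) := by
  have hp0 : 0 < p := by omega
  have h2 : 2 * ((p + 1) / 2) = p + 1 := by
    obtain ⟨m, hm⟩ := hp; omega
  set γ : Equiv.Perm (Fin n) := dblPerm p n h2 hp0 hpn with hγ
  set ρ : Equiv.Perm (Fin n) := γ * τ * γ⁻¹ with hρ
  -- basic shift facts
  have hτs : Shift p 1 τ := fun i hi => by simpa [hi] using hτ i
  have hτfix : ∀ i : Fin n, ¬ (i : ℕ) < p → τ i = i := fun i hi =>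
    Fin.ext (by simpa [hi] using hτ i)
  have hρs : Shift p 2 ρ := by
    intro i hi
    show (((γ * τ * γ⁻¹) i : ℕ)) = _
    rw [Equiv.Perm.mul_apply, Equiv.Perm.mul_apply,
        dblPerm_inv_apply_lt h2 hp0 hpn hi]
    have hh : (p + 1) / 2 * (i : ℕ) % p < p := Nat.mod_lt _ hp0
    have hτh : τ ⟨(p + 1) / 2 * (i : ℕ) % p, hh.trans_le hpn⟩
        = ⟨((p + 1) / 2 * (i : ℕ) % p + 1) % p, (Nat.mod_lt _ hp0).trans_le hpn⟩ := by
      apply Fin.ext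
      simpa [hh] using hτ ⟨(p + 1) / 2 * (i : ℕ) % p, hh.trans_le hpn⟩
    rw [hτh, dblPerm_apply_lt h2 hp0 hpn (Nat.mod_lt _ hp0)]
    show 2 * (((p + 1) / 2 * (i : ℕ) % p + 1) % p) % p = ((i : ℕ) + 2) % p
    apply natmod_eq hp0 (Nat.mod_lt _ hp0)
    push_cast [ZMod.natCast_mod]
    linear_combination (((i : ℕ) : ZMod p)) * halfkey h2
  have hρfix : ∀ i : Fin n, ¬ (i : ℕ) < p → ρ i = i := by
    intro i hi
    show (γ * τ * γ⁻¹) i = i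
    rw [Equiv.Perm.mul_apply, Equiv.Perm.mul_apply,
        dblPerm_inv_apply_ge h2 hp0 hpn hi, hτfix i hi, dblPerm_apply_ge h2 hp0 hpn hi]
  have hcomm : τ * ρ = ρ * τ := by
    apply Equiv.ext
    intro i
    by_cases hi : (i : ℕ) < p
    · apply Fin.ext
      rw [(Shift.mul hp0 hτs hρs) i hi, (Shift.mul hp0 hρs hτs) i hi]
    · have e1 := hτfix i hi
      have e2 := hρfix i hi
      simp [Equiv.Perm.mul_apply, e1, e2]
  -- membership helper
  have hKmem : ∀ (v : Fin n → ZMod 2) (σ : Equiv.Perm (Fin n)),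
      (∑ i, v i) = 0 → W.mk v σ ∈ H := by
    intro v σ hv
    rcases hH with rfl | rfl
    · exact Subgroup.mem_top _
    · exact hv
  have hγH : W.mk 0 γ ∈ H := hKmem 0 γ (by simp)
  set rH : ↥H := (⟨W.mk a τ, hw⟩ : H) with hrH
  set gH : ↥H := (⟨W.mk 0 γ, hγH⟩ : H) with hgH
  set sH : ↥H := gH * rH * gH⁻¹ with hsH
  set cγ : Fin n → ZMod 2 := permAct γ a with hcγ
  have hsval : (sH : W n) = W.mk cγ ρ := by
    show (W.mk 0 γ) * (W.mk a τ) * (W.mk 0 γ)⁻¹ = _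
    refine W.ext ?_ rfl
    funext i
    simp [permAct, hcγ]
  have hsperm : ((sH : W n)).perm = ρ := by rw [hsval]
  have QPmul : ∀ x y : ↥H, (∃ k, Shift p k ((x : W n)).perm) →
      (∃ k, Shift p k ((y : W n)).perm) →
      (∃ k, Shift p k (((x * y : ↥H) : W n)).perm) := by
    rintro x y ⟨k, hk⟩ ⟨m, hm⟩
    exact ⟨m + k, Shift.mul hp0 hk hm⟩
  have QPinv : ∀ x : ↥H, (∃ k, Shift p k ((x : W n)).perm) →
      (∃ k, Shift p k (((x⁻¹ : ↥H) : W n)).perm) := by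
    rintro x ⟨k, hk⟩
    exact ⟨p - k % p, Shift.inv hp0 hpn hk⟩
  have QPone : ∃ k, Shift p k (((1 : ↥H) : W n)).perm := ⟨0, Shift.one hp0⟩
  have QPr : ∃ k, Shift p k ((rH : W n)).perm := ⟨1, hτs⟩
  have QPs : ∃ k, Shift p k ((sH : W n)).perm := ⟨2, by rw [hsperm]; exact hρs⟩
  refine ⟨{y : ↥H | ∃ t : ↥H, (∃ k, Shift p k ((t : W n)).perm) ∧ y = t * rH * t⁻¹},
          {y : ↥H | ∃ u : ↥H, (∃ k, Shift p k ((u : W n)).perm) ∧ y = u * sH * u⁻¹},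
          ?_, ?_, ?_, ?_, ?_, ?_, ?_, ?_, ?_⟩
  · rintro y ⟨t, -, rfl⟩
    exact ⟨t, rfl⟩
  · rintro y ⟨u, -, rfl⟩
    refine ⟨u * gH, ?_⟩
    rw [hsH]
    group
  · exact ⟨rH, 1, QPone, by group⟩
  · exact ⟨sH, 1, QPone, by group⟩
  · rw [Set.disjoint_left]
    rintro y ⟨t, ⟨kt, hkt⟩, rfl⟩ ⟨u, ⟨ku, hku⟩, hyu⟩
    have hperm : ((t : W n)).perm * τ * ((t : W n)).perm⁻¹
        = ((u : W n)).perm * ρ * ((u : W n)).perm⁻¹ := by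
      have h0 := congrArg (fun z : ↥H => ((z : W n)).perm) hyu
      simpa [hsperm] using h0
    have S1 : Shift p ((p - kt % p) + (1 + kt))
        (((t : W n)).perm * τ * ((t : W n)).perm⁻¹) :=
      Shift.mul hp0 (Shift.mul hp0 hkt hτs) (Shift.inv hp0 hpn hkt)
    have S2 : Shift p ((p - ku % p) + (2 + ku))
        (((u : W n)).perm * ρ * ((u : W n)).perm⁻¹) :=
      Shift.mul hp0 (Shift.mul hp0 hku hρs) (Shift.inv hp0 hpn hku)
    have v1 := S1 ⟨0, by omega⟩ hp0
    have v2 := S2 ⟨0, by omega⟩ hp0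
    rw [hperm] at v1
    rw [v2] at v1
    have w1 : ((0 : ℕ) + ((p - ku % p) + (2 + ku))) % p = ((0 : ℕ) + 2) % p :=
      modK' hp0 ku 2 0
    have w2 : ((0 : ℕ) + ((p - kt % p) + (1 + kt))) % p = ((0 : ℕ) + 1) % p :=
      modK' hp0 kt 1 0
    have v3 : ((0 : ℕ) + ((p - ku % p) + (2 + ku))) % p
        = ((0 : ℕ) + ((p - kt % p) + (1 + kt))) % p := v1
    rw [w1, w2] at v3
    rw [Nat.zero_add, Nat.zero_add, Nat.mod_eq_of_lt (by omega),
      Nat.mod_eq_of_lt (by omega)] at v3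
    omega
  · rintro r ⟨t, ht, rfl⟩ r' ⟨t', ht', rfl⟩
    exact ⟨t * rH * t⁻¹ * t',
      QPmul _ _ (QPmul _ _ (QPmul _ _ ht QPr) (QPinv _ ht)) ht',
      conj_conj rH rH t t'⟩
  · rintro s ⟨u, hu, rfl⟩ s' ⟨u', hu', rfl⟩
    exact ⟨u * sH * u⁻¹ * u',
      QPmul _ _ (QPmul _ _ (QPmul _ _ hu QPs) (QPinv _ hu)) hu',
      conj_conj sH sH u u'⟩
  · rintro r ⟨t, ht, rfl⟩ s ⟨u, hu, rfl⟩
    constructor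
    · exact ⟨t * rH * t⁻¹ * u,
        QPmul _ _ (QPmul _ _ (QPmul _ _ ht QPr) (QPinv _ ht)) hu,
        conj_conj rH sH t u⟩
    · exact ⟨u * sH * u⁻¹ * t,
        QPmul _ _ (QPmul _ _ (QPmul _ _ hu QPs) (QPinv _ hu)) ht,
        conj_conj sH rH u t⟩
  -- the sq(a,b) ≠ b part
  · have h0n : 0 < n := by omega
    have h1n : 1 < n := by omega
    have h2n : 2 < n := by omega
    have h3n : 3 < n := by omega
    have hP1n : p - 1 < n := by omega
    have hP2n : p - 2 < n := by omega
    have hP3n : p - 3 < n := by omega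
    by_cases hD : (fun i => vec3 τ ρ a cγ i + cγ i) = (0 : Fin n → ZMod 2)
    · -- degenerate case: conjugate the first witness by the vector e
      set e : Fin n → ZMod 2 :=
        Pi.single (⟨0, h0n⟩ : Fin n) (1 : ZMod 2) + Pi.single (⟨1, h1n⟩ : Fin n) 1
        with hedef
      have heH : W.mk e 1 ∈ H := by
        apply hKmem
        rw [hedef]
        simp only [Pi.add_apply, Finset.sum_add_distrib, Finset.sum_pi_single',
          Finset.mem_univ, if_pos]
        decide
      set tH : ↥H := (⟨W.mk e 1, heH⟩ : H) with htH
      refine ⟨tH * rH * tH⁻¹, ⟨tH, ⟨0, Shift.one hp0⟩, rfl⟩,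
        sH, ⟨1, QPone, by group⟩, ?_⟩
      intro hEq
      have h0 : sqD (((tH * rH * tH⁻¹ : ↥H) : W n)) ((sH : W n)) = (sH : W n) :=
        congrArg Subtype.val hEq
      have htval : ((tH * rH * tH⁻¹ : ↥H) : W n) = W.mk (e + a + permAct τ e) τ := by
        show (W.mk e 1) * (W.mk a τ) * (W.mk e 1)⁻¹ = _
        refine W.ext ?_ ?_
        · funext i
          simp [permAct, neg_zmod2_elt]
        · show (1 * τ) * (1 : Equiv.Perm (Fin n))⁻¹ = τ
          group
      rw [htval, hsval, sq_formula τ ρ hcomm _ cγ] at h0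
      have h2v : vec3 τ ρ (e + a + permAct τ e) cγ ⟨3, h3n⟩ = cγ ⟨3, h3n⟩ :=
        congrFun (congrArg W.vec h0) ⟨3, h3n⟩
      rw [vec3_split τ ρ e a cγ, Pi.add_apply] at h2v
      -- inverse-application computations
      have hA : τ⁻¹ (⟨3, h3n⟩ : Fin n) = ⟨2, h2n⟩ :=
        Shift.inv_apply hp0 hpn hτs _ (show (3:ℕ) < p by omega)
          (modinv_helper hp0 (by omega) (by omega)
            (Or.inr (show (3:ℕ) + (p - 1) = 2 + p by omega))) h2n
      have hB : ρ⁻¹ (⟨2, h2n⟩ : Fin n) = ⟨0, h0n⟩ :=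
        Shift.inv_apply hp0 hpn hρs _ (show (2:ℕ) < p by omega)
          (modinv_helper hp0 (by omega) (by omega)
            (Or.inr (show (2:ℕ) + (p - 2) = 0 + p by omega))) h0n
      have hC : ρ⁻¹ (⟨0, h0n⟩ : Fin n) = ⟨p - 2, hP2n⟩ :=
        Shift.inv_apply hp0 hpn hρs _ (show (0:ℕ) < p by omega)
          (modinv_helper hp0 (by omega) (by omega)
            (Or.inl (show (0:ℕ) + (p - 2) = p - 2 by omega))) hP2n
      have hBB : ρ⁻¹ (⟨3, h3n⟩ : Fin n) = ⟨1, h1n⟩ :=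
        Shift.inv_apply hp0 hpn hρs _ (show (3:ℕ) < p by omega)
          (modinv_helper hp0 (by omega) (by omega)
            (Or.inr (show (3:ℕ) + (p - 2) = 1 + p by omega))) h1n
      have hD1 : τ⁻¹ (⟨0, h0n⟩ : Fin n) = ⟨p - 1, hP1n⟩ :=
        Shift.inv_apply hp0 hpn hτs _ (show (0:ℕ) < p by omega)
          (modinv_helper hp0 (by omega) (by omega)
            (Or.inl (show (0:ℕ) + (p - 1) = p - 1 by omega))) hP1n
      have hD2 : τ⁻¹ (⟨p - 2, hP2n⟩ : Fin n) = ⟨p - 3, hP3n⟩ :=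
        Shift.inv_apply hp0 hpn hτs _ (show p - 2 < p by omega)
          (modinv_helper hp0 (by omega) (by omega)
            (Or.inr (show (p - 2) + (p - 1) = (p - 3) + p by omega))) hP3n
      have hD3 : τ⁻¹ (⟨1, h1n⟩ : Fin n) = ⟨0, h0n⟩ :=
        Shift.inv_apply hp0 hpn hτs _ (show (1:ℕ) < p by omega)
          (modinv_helper hp0 (by omega) (by omega)
            (Or.inr (show (1:ℕ) + (p - 1) = 0 + p by omega))) h0n
      -- values of e
      have he0 : e (⟨0, h0n⟩ : Fin n) = 1 := by
        rw [hedef]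
        rw [Pi.add_apply]
        rw [Pi.single_apply, Pi.single_apply, if_pos rfl,
          if_neg (by simp only [Fin.mk.injEq]; omega), add_zero]
      have he1 : e (⟨1, h1n⟩ : Fin n) = 1 := by
        rw [hedef]
        rw [Pi.add_apply]
        rw [Pi.single_apply, Pi.single_apply, if_pos rfl,
          if_neg (by simp only [Fin.mk.injEq]; omega), zero_add]
      have hegen : ∀ (m : ℕ) (hmn : m < n), m ≠ 0 → m ≠ 1 →
          e (⟨m, hmn⟩ : Fin n) = 0 := by
        intro m hmn hm0 hm1
        rw [hedef]
        rw [Pi.add_apply]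
        rw [Pi.single_apply, Pi.single_apply,
          if_neg (by simp only [Fin.mk.injEq]; omega),
          if_neg (by simp only [Fin.mk.injEq]; omega), add_zero]
      have he2 : e (⟨2, h2n⟩ : Fin n) = 0 := hegen 2 h2n (by omega) (by omega)
      have he3 : e (⟨3, h3n⟩ : Fin n) = 0 := hegen 3 h3n (by omega) (by omega)
      have heP1 : e (⟨p - 1, hP1n⟩ : Fin n) = 0 := hegen _ hP1n (by omega) (by omega)
      have heP2 : e (⟨p - 2, hP2n⟩ : Fin n) = 0 := hegen _ hP2n (by omega) (by omega)
      have heP3 : e (⟨p - 3, hP3n⟩ : Fin n) = 0 := hegen _ hP3n (by omega) (by omega)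
      have hΨ : ((e + permAct τ e)
          + permAct τ (permAct ρ ((e + permAct τ e) + permAct ρ (e + permAct τ e)))
          + permAct ρ (e + permAct τ e)) (⟨3, h3n⟩ : Fin n) = 1 := by
        simp only [Pi.add_apply, permAct]
        rw [hA, hB, hC, hBB, hD1, hD2, hD3]
        rw [he0, he1, he2, he3, heP1, heP2, heP3]
        decide
      have hv3 : vec3 τ ρ a cγ (⟨3, h3n⟩ : Fin n) = cγ (⟨3, h3n⟩ : Fin n) := by
        apply zmod2_eq_of_add_eq_zero
        have := congrFun hD ⟨3, h3n⟩
        simpa using this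
      rw [hΨ, hv3] at h2v
      exact zmod2_add_one_ne _ h2v
    · -- nondegenerate case: take the plain witnesses
      have hex : ∃ i, vec3 τ ρ a cγ i + cγ i ≠ 0 := by
        by_contra hcon
        push_neg at hcon
        exact hD (funext fun i => hcon i)
      obtain ⟨iD, hiD⟩ := hex
      refine ⟨rH, ⟨1, QPone, by group⟩, sH, ⟨1, QPone, by group⟩, ?_⟩
      intro hEq
      have h0 : sqD ((rH : W n)) ((sH : W n)) = (sH : W n) :=
        congrArg Subtype.val hEq
      have hrval : (rH : W n) = W.mk a τ := rfl
      rw [hrval, hsval, sq_formula τ ρ hcomm a cγ] at h0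
      have h2v : vec3 τ ρ a cγ iD = cγ iD := congrFun (congrArg W.vec h0) iD
      apply hiD
      rw [h2v]
      exact zmod2_add_self _
end

section
/- Let n > 4 and let τ ∈ S_n have cycle type (1^{n-2}, 2) (a single transposition). Let a ∈ (ℤ/2)^n and suppose there exist i, j with τ(i) = i, τ(j) = j and a_i ≠ a_j. Let H be either W_n or the subgroup K_n ⋊ S_n, and suppose (a,τ) ∈ H. Then the conjugacy class of (a,τ) in H is of type D. -/
theorem perm_inv_fix {n : ℕ} (σ : Equiv.Perm (Fin n)) (ℓ : Fin n) (h : σ ℓ = ℓ) :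
    σ⁻¹ ℓ = ℓ := by
  conv_lhs => rw [← h]
  simp

theorem W.conj_perm_fix {n : ℕ} (x y : W n) (ℓ : Fin n)
    (hx : x.perm ℓ = ℓ) (hy : y.perm ℓ = ℓ) : (x * y * x⁻¹).perm ℓ = ℓ := by
  have hx' := perm_inv_fix _ _ hx
  simp [Equiv.Perm.mul_apply, hx, hy, hx']

theorem W.conj_vec_fix {n : ℕ} (x y : W n) (ℓ : Fin n)
    (hx : x.perm ℓ = ℓ) (hy : y.perm ℓ = ℓ) : (x * y * x⁻¹).vec ℓ = y.vec ℓ := by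
  have hx' := perm_inv_fix _ _ hx
  have hy' := perm_inv_fix _ _ hy
  simp [W.mul_vec, W.inv_vec, permAct, hx, hy, hx', hy', Equiv.Perm.mul_apply, mul_inv_rev]
  rw [add_right_comm, CharTwo.add_self_eq_zero, zero_add]

set_option maxHeartbeats 1000000 in
/-- for `n > 4` and `τ ∈ S_n` a single transposition (cycle type
`(1^{n-2},2)`), if `a_i ≠ a_j` for some fixed points `i, j` of `τ`, then the
conjugacy class of `(a,τ)` in `H` (where `H` is `W n` or `K_n ⋊ S_n`) is of
type D. -/
theorem typeD_transposition (n : ℕ) (hn : 4 < n) (τ : Equiv.Perm (Fin n))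
    (hτ : τ.cycleType = {2})
    (a : Fin n → ZMod 2)
    (hij : ∃ i j : Fin n, τ i = i ∧ τ j = j ∧ a i ≠ a j)
    (H : Subgroup (W n)) (hH : H = ⊤ ∨ H = Ksub n)
    (hw : W.mk a τ ∈ H) :
    IsTypeD (conjClass (⟨W.mk a τ, hw⟩ : H)) := by
  classical
  obtain ⟨i, j, hti, htj, hab⟩ := hij
  -- τ is a swap
  have hcard : τ.support.card = 2 := by
    rw [← Equiv.Perm.sum_cycleType, hτ]; rfl
  obtain ⟨p, q, hpq, hτeq⟩ := Equiv.Perm.card_support_eq_two.mp hcard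
  have hij' : i ≠ j := fun h => hab (by rw [h])
  have hip : i ≠ p := by rintro rfl; rw [hτeq, Equiv.swap_apply_left] at hti; exact hpq hti.symm
  have hiq : i ≠ q := by rintro rfl; rw [hτeq, Equiv.swap_apply_right] at hti; exact hpq hti
  have hjp : j ≠ p := by rintro rfl; rw [hτeq, Equiv.swap_apply_left] at htj; exact hpq htj.symm
  have hjq : j ≠ q := by rintro rfl; rw [hτeq, Equiv.swap_apply_right] at htj; exact hpq htj
  -- find k outside {p,q,i,j}
  have hk : ∃ k : Fin n, k ∉ ({p, q, i, j} : Finset (Fin n)) := by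
    by_contra hcon
    push_neg at hcon
    have hsub : (Finset.univ : Finset (Fin n)) ⊆ {p, q, i, j} := fun k _ => hcon k
    have := Finset.card_le_card hsub
    simp only [Finset.card_univ, Fintype.card_fin] at this
    have h4 : ({p, q, i, j} : Finset (Fin n)).card ≤ 4 := by
      apply le_trans (Finset.card_insert_le _ _)
      apply Nat.succ_le_succ
      apply le_trans (Finset.card_insert_le _ _)
      apply Nat.succ_le_succ
      apply le_trans (Finset.card_insert_le _ _)
      apply Nat.succ_le_succ
      simp
    omega
  obtain ⟨k, hk⟩ := hk
  simp only [Finset.mem_insert, Finset.mem_singleton, not_or] at hk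
  obtain ⟨hkp, hkq, hki, hkj⟩ := hk
  set σ : Equiv.Perm (Fin n) := Equiv.swap q k * Equiv.swap i j with hσ
  -- values of σ
  have hσi : σ i = j := by
    simp [hσ, Equiv.Perm.mul_apply, Equiv.swap_apply_left,
      Equiv.swap_apply_of_ne_of_ne hjq (Ne.symm hkj)]
  have hσj : σ j = i := by
    simp [hσ, Equiv.Perm.mul_apply, Equiv.swap_apply_right,
      Equiv.swap_apply_of_ne_of_ne hiq (Ne.symm hki)]
  have hσq : σ q = k := by
    simp [hσ, Equiv.Perm.mul_apply, Equiv.swap_apply_of_ne_of_ne hiq.symm hjq.symm,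
      Equiv.swap_apply_left]
  have hσp : σ p = p := by
    simp [hσ, Equiv.Perm.mul_apply, Equiv.swap_apply_of_ne_of_ne hip.symm hjp.symm,
      Equiv.swap_apply_of_ne_of_ne hpq (Ne.symm hkp)]
  have hσinvi : σ⁻¹ i = j := by rw [← hσj]; simp
  -- g and r, s
  set r : W n := W.mk a τ with hr
  set g : W n := W.mk 0 σ with hg
  set s : W n := g * r * g⁻¹ with hs
  have hgH : g ∈ H := by
    rcases hH with rfl | rfl
    · trivial
    · show ∑ l, (0 : Fin n → ZMod 2) l = 0
      simp
  have hsH : s ∈ H := mul_mem (mul_mem hgH hw) (inv_mem hgH)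
  -- s components
  have hsperm : s.perm = σ * τ * σ⁻¹ := rfl
  have hsvec : s.vec = permAct σ a := by
    funext l
    show ((g * r) * g⁻¹).vec l = a (σ⁻¹ l)
    simp [W.mul_vec, W.inv_vec, permAct, hg, hr]
  have hτ' : σ * τ * σ⁻¹ = Equiv.swap p k := by
    rw [hτeq, ← Equiv.swap_apply_apply, hσp, hσq]
  have hspermi : s.perm i = i := by
    rw [hsperm, hτ']
    exact Equiv.swap_apply_of_ne_of_ne hip (Ne.symm hki)
  have hspermj : s.perm j = j := by
    rw [hsperm, hτ']
    exact Equiv.swap_apply_of_ne_of_ne hjp (Ne.symm hkj)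
  have hsveci : s.vec i = a j := by rw [hsvec]; show a (σ⁻¹ i) = a j; rw [hσinvi]
  -- the class
  set rH : H := (⟨r, hw⟩ : H) with hrH
  set sH : H := (⟨s, hsH⟩ : H) with hsHdef
  have hcoe_conj : ∀ x y : H, ((conjAct' x y : H) : W n) = (x : W n) * (y : W n) * (x : W n)⁻¹ := by
    intro x y; rfl
  set O : Set H := conjClass rH with hO
  have hOconj : ∀ x y : H, y ∈ O → conjAct' x y ∈ O := by
    rintro x y ⟨t, rfl⟩
    exact ⟨x * t, by rw [conjAct']; group⟩
  -- R and S
  set R : Set H := {x : H | x ∈ O ∧ (x : W n).perm i = i ∧ (x : W n).perm j = j ∧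
    (x : W n).vec i = a i} with hR
  set S : Set H := {x : H | x ∈ O ∧ (x : W n).perm i = i ∧ (x : W n).perm j = j ∧
    (x : W n).vec i = a j} with hS
  have hrR : rH ∈ R := by
    refine ⟨⟨1, by group⟩, hti, htj, rfl⟩
  have hsS : sH ∈ S := by
    refine ⟨⟨⟨g, hgH⟩, ?_⟩, hspermi, hspermj, hsveci⟩
    apply Subtype.ext
    rfl
  refine ⟨R, S, fun x hx => hx.1, fun x hx => hx.1, ⟨rH, hrR⟩, ⟨sH, hsS⟩, ?_, ?_, ?_, ?_, ?_⟩
  · -- disjoint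
    rw [Set.disjoint_left]
    rintro x ⟨_, _, _, hxi⟩ ⟨_, _, _, hxi'⟩
    exact hab (hxi ▸ hxi')
  · -- R closed
    rintro x ⟨hxO, hxi, hxj, hxv⟩ y ⟨hyO, hyi, hyj, hyv⟩
    refine ⟨hOconj x y hyO, ?_, ?_, ?_⟩
    · rw [hcoe_conj]; exact W.conj_perm_fix _ _ _ hxi hyi
    · rw [hcoe_conj]; exact W.conj_perm_fix _ _ _ hxj hyj
    · rw [hcoe_conj, W.conj_vec_fix _ _ _ hxi hyi]; exact hyv
  · -- S closed
    rintro x ⟨hxO, hxi, hxj, hxv⟩ y ⟨hyO, hyi, hyj, hyv⟩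
    refine ⟨hOconj x y hyO, ?_, ?_, ?_⟩
    · rw [hcoe_conj]; exact W.conj_perm_fix _ _ _ hxi hyi
    · rw [hcoe_conj]; exact W.conj_perm_fix _ _ _ hxj hyj
    · rw [hcoe_conj, W.conj_vec_fix _ _ _ hxi hyi]; exact hyv
  · -- mixed
    rintro x ⟨hxO, hxi, hxj, hxv⟩ y ⟨hyO, hyi, hyj, hyv⟩
    constructor
    · refine ⟨hOconj x y hyO, ?_, ?_, ?_⟩
      · rw [hcoe_conj]; exact W.conj_perm_fix _ _ _ hxi hyi
      · rw [hcoe_conj]; exact W.conj_perm_fix _ _ _ hxj hyj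
      · rw [hcoe_conj, W.conj_vec_fix _ _ _ hxi hyi]; exact hyv
    · refine ⟨hOconj y x hxO, ?_, ?_, ?_⟩
      · rw [hcoe_conj]; exact W.conj_perm_fix _ _ _ hyi hxi
      · rw [hcoe_conj]; exact W.conj_perm_fix _ _ _ hyj hxj
      · rw [hcoe_conj, W.conj_vec_fix _ _ _ hyi hxi]; exact hxv
  · -- sq condition
    refine ⟨rH, hrR, sH, hsS, ?_⟩
    intro hcontra
    have hval : ((sqD rH sH : H) : W n).perm q = s.perm q := by
      rw [hcontra]
    have hvcoe : ((sqD rH sH : H) : W n) = sqD r s := rfl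
    rw [hvcoe] at hval
    have hsq : (sqD r s).perm = r.perm * (s.perm * (r.perm * s.perm * r.perm⁻¹) * s.perm⁻¹)
        * r.perm⁻¹ := rfl
    have hrperm : r.perm = Equiv.swap p q := hτeq
    have hsp : s.perm = Equiv.swap p k := by rw [hsperm, hτ']
    rw [hsq, hrperm, hsp] at hval
    simp only [Equiv.swap_inv, Equiv.Perm.mul_apply, Equiv.swap_apply_left,
      Equiv.swap_apply_right, Equiv.swap_apply_of_ne_of_ne hkp hkq,
      Equiv.swap_apply_of_ne_of_ne (Ne.symm hpq) (Ne.symm hkq)] at hval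
    exact hpq hval
end
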